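/- Let G be a finite simple graph and n ≥ 1 a natural number. If a(G;x) = n·x, i.e., a_1(G) = n and a_k(G) = 0 for every k ≥ 2, then G is isomorphic to the empty (edgeless) graph E_n on n vertices; that is, G has exactly n vertices and no edges. -/
import Mathlib


open SimpleGraph Polynomial Finset

/-- `δ_S(v)`: the number of neighbors of `v` lying in the set `S`. -/
noncomputable def degIn {V : Type*} (G : SimpleGraph V) (S : Finset V) (v : V) : ℕ :=
  ((S : Set V) ∩ G.neighborSet v).ncard

/-- `δ(v)`: the degree of `v` in `G`. -/
noncomputable def degOf {V : Type*} (G : SimpleGraph V) (v : V) : ℕ :=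
  (G.neighborSet v).ncard

/-- `S` is a strong defensive alliance in `G`: `S` is nonempty and every `v ∈ S`
satisfies `2·δ_S(v) ≥ δ(v)`. -/
def IsStrongAlliance {V : Type*} (G : SimpleGraph V) (S : Finset V) : Prop :=
  S.Nonempty ∧ ∀ v ∈ S, degOf G v ≤ 2 * degIn G S v

/-- The alliances counted by the strong alliance polynomial: strong defensive alliances
whose induced subgraph is connected. -/
def IsCountedAlliance {V : Type*} (G : SimpleGraph V) (S : Finset V) : Prop :=
  IsStrongAlliance G S ∧ (G.induce (S : Set V)).Connected

/-- `a_k(G)`: the number of strong defensive alliances of cardinality `k` in `G`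
whose induced subgraph is connected. -/
noncomputable def aCoeff {V : Type*} (G : SimpleGraph V) (k : ℕ) : ℕ :=
  {S : Finset V | S.card = k ∧ IsCountedAlliance G S}.ncard

/-- The strong alliance polynomial `a(G;x) = Σ_k a_k(G) x^k`. -/
noncomputable def alliancePoly {V : Type*} [Fintype V] (G : SimpleGraph V) : Polynomial ℤ :=
  ∑ k ∈ Finset.range (Fintype.card V + 1), Polynomial.C (aCoeff G k : ℤ) * Polynomial.X ^ k

/-- The subgraph induced on a connected component is connected. -/
lemma comp_connected {V : Type*} (G : SimpleGraph V) (c : G.ConnectedComponent) :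
    (G.induce c.supp).Connected := by
  classical
  rw [connected_induce_iff, Subgraph.connected_iff_forall_exists_walk_subgraph]
  constructor
  · obtain ⟨v, hv⟩ := c.exists_rep
    exact ⟨v, hv⟩
  · intro u v hu hv
    simp only [Subgraph.induce_verts, ConnectedComponent.mem_supp_iff] at hu hv
    obtain ⟨p⟩ := ConnectedComponent.exact (hu.trans hv.symm)
    refine ⟨p, le_trans p.toSubgraph_le_induce_support (Subgraph.induce_mono_right ?_)⟩
    intro w hw
    have : G.Reachable u w := ⟨p.takeUntil w hw⟩
    simp only [ConnectedComponent.mem_supp_iff]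
    rw [← hu]
    exact (ConnectedComponent.sound this).symm

/-- If `a(G;x) = n·x` with `n ≥ 1`, i.e. `a_1(G) = n` and `a_k(G) = 0` for all
`k ≥ 2`, then `G` is isomorphic to the edgeless graph on `n` vertices: `G` has exactly `n`
vertices and no edges. -/
theorem stmt_2 {V : Type*} [Fintype V] (G : SimpleGraph V) (n : ℕ) (hn : 1 ≤ n)
    (h1 : aCoeff G 1 = n) (h2 : ∀ k : ℕ, 2 ≤ k → aCoeff G k = 0) :
    Fintype.card V = n ∧ G = ⊥ := by
  classical
  have hbot : G = ⊥ := by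
    by_contra hne
    obtain ⟨u, v, huv⟩ : ∃ u v, G.Adj u v := by
      by_contra hno
      push_neg at hno
      exact hne (by ext a b; simp [hno a b])
    set c := G.connectedComponentMk u with hc
    set S : Finset V := (Set.toFinite c.supp).toFinset with hSdef
    have hS : (S : Set V) = c.supp := Set.Finite.coe_toFinset _
    have hmem : ∀ w, w ∈ S ↔ G.connectedComponentMk w = c := by
      intro w
      rw [← Finset.mem_coe, hS]
      exact ConnectedComponent.mem_supp_iff _ _
    have hu : u ∈ S := (hmem u).mpr rfl
    have hv : v ∈ S := (hmem v).mpr (ConnectedComponent.sound huv.reachable).symm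
    have hcard : 2 ≤ S.card := by
      rw [show (2 : ℕ) = 1 + 1 from rfl]
      exact Finset.one_lt_card.mpr ⟨u, hu, v, hv, huv.ne⟩
    have halliance : IsCountedAlliance G S := by
      refine ⟨⟨⟨u, hu⟩, ?_⟩, ?_⟩
      · intro w hw
        have hsub : (G.neighborSet w : Set V) ⊆ (S : Set V) := by
          intro x hx
          rw [hS, ConnectedComponent.mem_supp_iff]
          have := ConnectedComponent.sound (G.adj_symm hx).reachable
          rw [this]
          exact (hmem w).mp hw
        have : degIn G S w = degOf G w := by
          unfold degIn degOf
          rw [Set.inter_eq_self_of_subset_right hsub]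
        omega
      · rw [hS]; exact comp_connected G c
    have : aCoeff G S.card ≠ 0 := by
      unfold aCoeff
      have hne2 : {T : Finset V | T.card = S.card ∧ IsCountedAlliance G T}.Nonempty :=
        ⟨S, rfl, halliance⟩
      have := (Set.ncard_pos (Set.toFinite _)).mpr hne2
      omega
    exact this (h2 S.card hcard)
  subst hbot
  refine ⟨?_, rfl⟩
  have key : {S : Finset V | S.card = 1 ∧ IsCountedAlliance (⊥ : SimpleGraph V) S}
      = Set.range (fun v : V => ({v} : Finset V)) := by
    ext S
    simp only [Set.mem_setOf_eq, Set.mem_range]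
    constructor
    · rintro ⟨hcard, -⟩
      obtain ⟨a, rfl⟩ := Finset.card_eq_one.mp hcard
      exact ⟨a, rfl⟩
    · rintro ⟨a, rfl⟩
      refine ⟨Finset.card_singleton a, ⟨⟨a, Finset.mem_singleton_self a⟩, ?_⟩, ?_⟩
      · intro w hw
        have : degOf (⊥ : SimpleGraph V) w = 0 := by
          unfold degOf
          have : (⊥ : SimpleGraph V).neighborSet w = ∅ := by
            ext x; simp [SimpleGraph.neighborSet]
          rw [this]
          simp
        omega
      · haveI : Nonempty (↑((({a} : Finset V) : Set V))) := ⟨⟨a, by simp⟩⟩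
        refine SimpleGraph.Connected.mk ?_
        intro x y
        have hx := x.2
        have hy := y.2
        simp only [Finset.coe_singleton, Set.mem_singleton_iff] at hx hy
        have : x = y := Subtype.ext (hx.trans hy.symm)
        rw [this]
  have : aCoeff (⊥ : SimpleGraph V) 1 = Fintype.card V := by
    unfold aCoeff
    rw [key, ← Nat.card_coe_set_eq, Nat.card_range_of_injective
      (fun a b h => Finset.singleton_injective h), Nat.card_eq_fintype_card]
  omega
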